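/- Let D = Dⁿ ∪ Dˣ be a database instance, Q a monotone Boolean query, t ∈ Dⁿ, and Γ ⊆ Dⁿ with t ∉ Γ. Then t is a most responsible actual cause for Q with C-minimal contingency set Γ (i.e., Γ is a contingency set for t of minimum cardinality) if and only if Γ ∪ {t} is a minimum hitting set for 𝔖ⁿ(D). (Proposition 6(b)) -/
import Mathlib


open scoped Classical

variable {α : Type*} [DecidableEq α]

/-- A monotone Boolean query on database instances (finite sets of tuples). -/
def MonotoneQuery (Q : Finset α → Prop) : Prop :=
  ∀ ⦃X Y : Finset α⦄, X ⊆ Y → Q X → Q Y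

/-- `Γ` is a contingency set for tuple `t` wrt query `Q`, instance `D`,
endogenous part `Dn`. -/
def IsContingency (D Dn : Finset α) (Q : Finset α → Prop) (t : α) (Γ : Finset α) : Prop :=
  Γ ⊆ Dn ∧ t ∉ Γ ∧ Q (D \ Γ) ∧ ¬ Q (D \ (Γ ∪ {t}))

/-- `t` is an actual cause for `Q`. -/
def IsActualCause (D Dn : Finset α) (Q : Finset α → Prop) (t : α) : Prop :=
  t ∈ Dn ∧ ∃ Γ : Finset α, IsContingency D Dn Q t Γ

/-- Minimum cardinality of a contingency set for `t`. -/
noncomputable def minContingency (D Dn : Finset α) (Q : Finset α → Prop) (t : α) : ℕ :=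
  sInf {m : ℕ | ∃ Γ : Finset α, IsContingency D Dn Q t Γ ∧ Γ.card = m}

/-- Responsibility of `t`: `1/(1+m)` with `m` the minimum size of a contingency set,
and `0` if `t` is not an actual cause. -/
noncomputable def resp (D Dn : Finset α) (Q : Finset α → Prop) (t : α) : ℚ :=
  if IsActualCause D Dn Q t then 1 / (1 + (minContingency D Dn Q t : ℚ)) else 0

/-- `t` is a most responsible actual cause. -/
def IsMostResponsibleCause (D Dn : Finset α) (Q : Finset α → Prop) (t : α) : Prop :=
  IsActualCause D Dn Q t ∧ ∀ t' : α, ¬ resp D Dn Q t < resp D Dn Q t'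

/-- `D'` is an S-repair of `D` wrt the denial constraint `¬ Q`. -/
def IsSRepair (D : Finset α) (Q : Finset α → Prop) (D' : Finset α) : Prop :=
  D' ⊆ D ∧ ¬ Q D' ∧ ∀ D'' : Finset α, D'' ⊆ D → ¬ Q D'' → D' ⊆ D'' → D'' = D'

/-- `D'` is a C-repair of `D` wrt the denial constraint `¬ Q`. -/
def IsCRepair (D : Finset α) (Q : Finset α → Prop) (D' : Finset α) : Prop :=
  D' ⊆ D ∧ ¬ Q D' ∧ ∀ D'' : Finset α, D'' ⊆ D → ¬ Q D'' → D''.card ≤ D'.card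

/-- `Γ ∈ CT(t)`: `Γ` is an S-minimal contingency set for `t`. -/
def InCT (D Dn : Finset α) (Q : Finset α → Prop) (t : α) (Γ : Finset α) : Prop :=
  IsContingency D Dn Q t Γ ∧ ∀ Γ'' : Finset α, Γ'' ⊂ Γ → Q (D \ (Γ'' ∪ {t}))

/-- `𝔖(D)`: S-minimal subsets of `D` satisfying `Q`. -/
def Sfam (D : Finset α) (Q : Finset α → Prop) : Set (Finset α) :=
  {s | s ⊆ D ∧ Q s ∧ ∀ s' : Finset α, s' ⊂ s → ¬ Q s'}

/-- Subsets of `Dn` contained in some `s' ∈ 𝔖(D)` whose remainder is exogenous. -/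
def SnPre (D Dn Dx : Finset α) (Q : Finset α → Prop) : Set (Finset α) :=
  {s | s ⊆ Dn ∧ ∃ s' ∈ Sfam D Q, s ⊆ s' ∧ s' \ s ⊆ Dx}

/-- `𝔖ⁿ(D)`: the inclusion-minimal elements of `SnPre`. -/
def SnFam (D Dn Dx : Finset α) (Q : Finset α → Prop) : Set (Finset α) :=
  {s ∈ SnPre D Dn Dx Q | ∀ s' ∈ SnPre D Dn Dx Q, s' ⊆ s → s' = s}

/-- `H` is a hitting set for `𝔖ⁿ(D)`. -/
def IsHittingSet (D Dn Dx : Finset α) (Q : Finset α → Prop) (H : Finset α) : Prop :=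
  H ⊆ Dn ∧ ∀ s ∈ SnFam D Dn Dx Q, (H ∩ s).Nonempty

/-- `H` is an S-minimal hitting set for `𝔖ⁿ(D)`. -/
def IsSMinimalHittingSet (D Dn Dx : Finset α) (Q : Finset α → Prop) (H : Finset α) : Prop :=
  IsHittingSet D Dn Dx Q H ∧ ∀ H' : Finset α, H' ⊂ H → ¬ IsHittingSet D Dn Dx Q H'

/-- `H` is a minimum-cardinality hitting set for `𝔖ⁿ(D)`. -/
def IsMinimumHittingSet (D Dn Dx : Finset α) (Q : Finset α → Prop) (H : Finset α) : Prop :=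
  IsHittingSet D Dn Dx Q H ∧ ∀ H' : Finset α, IsHittingSet D Dn Dx Q H' → H.card ≤ H'.card

/-- `Δ` is a diagnosis for the diagnosis problem associated with `Q`. -/
def IsDiagnosis (D Dn : Finset α) (Q : Finset α → Prop) (Δ : Finset α) : Prop :=
  Δ ⊆ Dn ∧ ¬ Q (D \ Δ)

/-- `Δ ∈ 𝒟(ℳ,t)`: `Δ` is an inclusion-minimal diagnosis containing `t`. -/
def IsMinimalDiagnosisWith (D Dn : Finset α) (Q : Finset α → Prop) (t : α)
    (Δ : Finset α) : Prop :=
  IsDiagnosis D Dn Q Δ ∧ t ∈ Δ ∧ ∀ Δ' : Finset α, Δ' ⊂ Δ → ¬ IsDiagnosis D Dn Q Δ'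

/-- `Δ ∈ MCD(ℳ,t)`: `Δ` is an element of `𝒟(ℳ,t)` of minimum cardinality. -/
def IsMCDWith (D Dn : Finset α) (Q : Finset α → Prop) (t : α) (Δ : Finset α) : Prop :=
  IsMinimalDiagnosisWith D Dn Q t Δ ∧
    ∀ Δ' : Finset α, IsMinimalDiagnosisWith D Dn Q t Δ' → Δ.card ≤ Δ'.card

/-- Any set satisfying `Q` contains an inclusion-minimal subset satisfying `Q`. -/
lemma exists_minimal_Q (Q : Finset α → Prop) {X : Finset α} (hQX : Q X) :
    ∃ s, s ⊆ X ∧ Q s ∧ ∀ s', s' ⊂ s → ¬ Q s' := by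
  classical
  obtain ⟨s, hs, hmin⟩ := (X.powerset.filter (fun s => Q s)).exists_min_image Finset.card
    ⟨X, by simpa using hQX⟩
  simp only [Finset.mem_filter, Finset.mem_powerset] at hs
  refine ⟨s, hs.1, hs.2, fun s' hlt hQ' => ?_⟩
  have : s.card ≤ s'.card := hmin s' (by
    simp only [Finset.mem_filter, Finset.mem_powerset]
    exact ⟨hlt.subset.trans hs.1, hQ'⟩)
  exact absurd (Finset.card_lt_card hlt) (by omega)

/-- Any member of `SnPre` contains an element of `SnFam`. -/
lemma exists_snfam_subset (D Dn Dx : Finset α) (Q : Finset α → Prop) {s : Finset α}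
    (hs : s ∈ SnPre D Dn Dx Q) : ∃ s₀ ∈ SnFam D Dn Dx Q, s₀ ⊆ s := by
  classical
  obtain ⟨s₀, hs₀, hmin⟩ := (s.powerset.filter (fun u => u ∈ SnPre D Dn Dx Q)).exists_min_image
    Finset.card ⟨s, by simpa using hs⟩
  simp only [Finset.mem_filter, Finset.mem_powerset] at hs₀
  refine ⟨s₀, ⟨hs₀.2, fun s' hs' hsub => ?_⟩, hs₀.1⟩
  have : s₀.card ≤ s'.card := hmin s' (by
    simp only [Finset.mem_filter, Finset.mem_powerset]
    exact ⟨hsub.trans hs₀.1, hs'⟩)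
  exact Finset.eq_of_subset_of_card_le hsub this

/-- For `H ⊆ Dn`, `H` is a hitting set iff `¬ Q (D \ H)`. -/
lemma hit_iff (D Dn Dx : Finset α) (Q : Finset α → Prop)
    (hpart : D = Dn ∪ Dx) (hdisj : Disjoint Dn Dx) (hmono : MonotoneQuery Q)
    {H : Finset α} (hH : H ⊆ Dn) :
    IsHittingSet D Dn Dx Q H ↔ ¬ Q (D \ H) := by
  constructor
  · intro hhit hQ
    obtain ⟨s', hs'sub, hQs', hs'min⟩ := exists_minimal_Q Q hQ
    have hs'D : s' ⊆ D := hs'sub.trans (Finset.sdiff_subset)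
    have hSfam : s' ∈ Sfam D Q := ⟨hs'D, hQs', hs'min⟩
    have hpre : s' ∩ Dn ∈ SnPre D Dn Dx Q := by
      refine ⟨Finset.inter_subset_right, s', hSfam, Finset.inter_subset_left, fun x hx => ?_⟩
      simp only [Finset.mem_sdiff, Finset.mem_inter, not_and] at hx
      have hxD : x ∈ D := hs'D hx.1
      rw [hpart] at hxD
      rcases Finset.mem_union.mp hxD with h | h
      · exact absurd h (hx.2 hx.1)
      · exact h
    obtain ⟨s₀, hs₀fam, hs₀sub⟩ := exists_snfam_subset D Dn Dx Q hpre
    obtain ⟨x, hx⟩ := hhit.2 s₀ hs₀fam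
    rw [Finset.mem_inter] at hx
    have : x ∈ D \ H := hs'sub (Finset.inter_subset_left (hs₀sub hx.2))
    exact (Finset.mem_sdiff.mp this).2 hx.1
  · intro hnQ
    refine ⟨hH, fun s hs => ?_⟩
    by_contra hemp
    rw [Finset.not_nonempty_iff_eq_empty] at hemp
    obtain ⟨⟨hsDn, s', hs'fam, hss', hdiff⟩, _⟩ := hs
    have hs'sub : s' ⊆ D \ H := by
      intro x hx
      rw [Finset.mem_sdiff]
      refine ⟨hs'fam.1 hx, fun hxH => ?_⟩
      by_cases hxs : x ∈ s
      · have : x ∈ H ∩ s := Finset.mem_inter.mpr ⟨hxH, hxs⟩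
        simp [hemp] at this
      · have hxDx : x ∈ Dx := hdiff (Finset.mem_sdiff.mpr ⟨hx, hxs⟩)
        exact (Finset.disjoint_left.mp hdisj (hH hxH)) hxDx
    exact hnQ (hmono hs'sub hs'fam.2.1)

lemma one_div_le_one_div_nat {a b : ℕ} (h : a ≤ b) :
    (1 : ℚ) / (1 + b) ≤ 1 / (1 + a) := by
  apply one_div_le_one_div_of_le
  · positivity
  · have : (a : ℚ) ≤ b := by exact_mod_cast h
    linarith

lemma nat_le_of_one_div_le {a b : ℕ} (h : (1 : ℚ) / (1 + a) ≤ 1 / (1 + b)) : b ≤ a := by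
  by_contra hab
  push_neg at hab
  have h2 := one_div_le_one_div_nat (Nat.succ_le_of_lt hab)
  have hlt : (1 : ℚ) / (1 + b) < 1 / (1 + a) := by
    have ha : (0 : ℚ) < 1 + a := by positivity
    have hb : (0 : ℚ) < 1 + b := by positivity
    apply one_div_lt_one_div_of_lt ha
    have : (a : ℚ) < b := by exact_mod_cast hab
    linarith
  linarith

/-- Proposition 6(b): `t` is a most responsible actual cause with C-minimal
contingency set `Γ` iff `Γ ∪ {t}` is a minimum hitting set for `𝔖ⁿ(D)`. -/
theorem mrc_iff_minimum_hs (D Dn Dx : Finset α) (Q : Finset α → Prop)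
    (hpart : D = Dn ∪ Dx) (hdisj : Disjoint Dn Dx) (hmono : MonotoneQuery Q)
    (t : α) (ht : t ∈ Dn) (Γ : Finset α) (hΓ : Γ ⊆ Dn) (htΓ : t ∉ Γ) :
    (IsMostResponsibleCause D Dn Q t ∧ IsContingency D Dn Q t Γ ∧
        ∀ Γ' : Finset α, IsContingency D Dn Q t Γ' → Γ.card ≤ Γ'.card) ↔
      IsMinimumHittingSet D Dn Dx Q (Γ ∪ {t}) := by
  classical
  have hΓt : Γ ∪ {t} ⊆ Dn := Finset.union_subset hΓ (Finset.singleton_subset_iff.mpr ht)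
  have hcardΓt : (Γ ∪ {t}).card = Γ.card + 1 := by
    rw [Finset.union_comm, ← Finset.insert_eq, Finset.card_insert_of_notMem htΓ]
  constructor
  · rintro ⟨⟨hac, hmrc⟩, hcont, hmin⟩
    have hmc : minContingency D Dn Q t = Γ.card := by
      have hne : {m : ℕ | ∃ Γ'' : Finset α, IsContingency D Dn Q t Γ'' ∧ Γ''.card = m}.Nonempty :=
        ⟨Γ.card, Γ, hcont, rfl⟩
      obtain ⟨Γ₀, h₀, hc₀⟩ := Nat.sInf_mem hne
      have hceq : minContingency D Dn Q t = Γ₀.card := hc₀.symm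
      exact le_antisymm (Nat.sInf_le ⟨Γ, hcont, rfl⟩) (hceq ▸ hmin Γ₀ h₀)
    have hrespt : resp D Dn Q t = 1 / (1 + (Γ.card : ℚ)) := by
      rw [resp, if_pos hac, hmc]
    refine ⟨(hit_iff D Dn Dx Q hpart hdisj hmono hΓt).mpr hcont.2.2.2, ?_⟩
    intro H' hH'
    have hnQ' : ¬ Q (D \ H') := (hit_iff D Dn Dx Q hpart hdisj hmono hH'.1).mp hH'
    have hQD : Q D := hmono (Finset.sdiff_subset) hcont.2.2.1
    -- find a minimal subset H'' of H' with ¬ Q (D \ H'')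
    obtain ⟨H'', hH''mem, hH''min⟩ := (H'.powerset.filter (fun K => ¬ Q (D \ K))).exists_min_image
      Finset.card ⟨H', by simpa using hnQ'⟩
    simp only [Finset.mem_filter, Finset.mem_powerset] at hH''mem
    obtain ⟨hH''sub, hH''nQ⟩ := hH''mem
    have hH''ne : H''.Nonempty := by
      rcases Finset.eq_empty_or_nonempty H'' with h | h
      · rw [h, Finset.sdiff_empty] at hH''nQ; exact absurd hQD hH''nQ
      · exact h
    obtain ⟨t', ht'⟩ := hH''ne
    set Γ' := H''.erase t' with hΓ'def
    have hΓ'card : Γ'.card + 1 = H''.card := by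
      rw [hΓ'def, Finset.card_erase_of_mem ht']
      have := Finset.card_pos.mpr ⟨t', ht'⟩
      omega
    have hQΓ' : Q (D \ Γ') := by
      by_contra hn
      have : H''.card ≤ Γ'.card := hH''min Γ' (by
        simp only [Finset.mem_filter, Finset.mem_powerset]
        exact ⟨(Finset.erase_subset _ _).trans hH''sub, hn⟩)
      omega
    have hcont' : IsContingency D Dn Q t' Γ' := by
      refine ⟨(Finset.erase_subset _ _).trans (hH''sub.trans hH'.1), Finset.notMem_erase _ _,
        hQΓ', ?_⟩
      rw [Finset.union_comm, ← Finset.insert_eq, Finset.insert_erase ht']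
      exact hH''nQ
    have hac' : IsActualCause D Dn Q t' := ⟨hH'.1 (hH''sub ht'), Γ', hcont'⟩
    have hmc' : minContingency D Dn Q t' ≤ Γ'.card := Nat.sInf_le ⟨Γ', hcont', rfl⟩
    have hresp' : resp D Dn Q t' = 1 / (1 + (minContingency D Dn Q t' : ℚ)) := by
      rw [resp, if_pos hac']
    have hle : resp D Dn Q t' ≤ resp D Dn Q t := not_lt.mp (hmrc t')
    rw [hresp', hrespt] at hle
    have h1 : Γ.card ≤ minContingency D Dn Q t' := nat_le_of_one_div_le hle
    have h2 : H''.card ≤ H'.card := Finset.card_le_card hH''sub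
    omega
  · rintro ⟨hhit, hminhit⟩
    have hnQΓt : ¬ Q (D \ (Γ ∪ {t})) := (hit_iff D Dn Dx Q hpart hdisj hmono hΓt).mp hhit
    have hQΓ : Q (D \ Γ) := by
      by_contra hn
      have : IsHittingSet D Dn Dx Q Γ := (hit_iff D Dn Dx Q hpart hdisj hmono hΓ).mpr hn
      have := hminhit Γ this
      omega
    have hcont : IsContingency D Dn Q t Γ := ⟨hΓ, htΓ, hQΓ, hnQΓt⟩
    have hmin : ∀ Γ' : Finset α, IsContingency D Dn Q t Γ' → Γ.card ≤ Γ'.card := by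
      intro Γ' hc'
      have hhit' : IsHittingSet D Dn Dx Q (Γ' ∪ {t}) := by
        have hsub : Γ' ∪ {t} ⊆ Dn := Finset.union_subset hc'.1 (Finset.singleton_subset_iff.mpr ht)
        exact (hit_iff D Dn Dx Q hpart hdisj hmono hsub).mpr hc'.2.2.2
      have h1 := hminhit _ hhit'
      have h2 : (Γ' ∪ {t}).card = Γ'.card + 1 := by
        rw [Finset.union_comm, ← Finset.insert_eq, Finset.card_insert_of_notMem hc'.2.1]
      omega
    have hac : IsActualCause D Dn Q t := ⟨ht, Γ, hcont⟩
    have hmc : minContingency D Dn Q t = Γ.card := by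
      have hne : {m : ℕ | ∃ Γ'' : Finset α, IsContingency D Dn Q t Γ'' ∧ Γ''.card = m}.Nonempty :=
        ⟨Γ.card, Γ, hcont, rfl⟩
      obtain ⟨Γ₀, h₀, hc₀⟩ := Nat.sInf_mem hne
      have hceq : minContingency D Dn Q t = Γ₀.card := hc₀.symm
      exact le_antisymm (Nat.sInf_le ⟨Γ, hcont, rfl⟩) (hceq ▸ hmin Γ₀ h₀)
    refine ⟨⟨hac, fun t' => not_lt.mpr ?_⟩, hcont, hmin⟩
    simp only [resp]
    rw [if_pos hac, hmc]
    by_cases hac' : IsActualCause D Dn Q t'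
    · rw [if_pos hac']
      -- the minimum is attained
      have hne : {m : ℕ | ∃ Γ'' : Finset α, IsContingency D Dn Q t' Γ'' ∧ Γ''.card = m}.Nonempty :=
        ⟨hac'.2.choose.card, hac'.2.choose, hac'.2.choose_spec, rfl⟩
      obtain ⟨Γ₀, hΓ₀, hΓ₀card⟩ := Nat.sInf_mem hne
      have hhit₀ : IsHittingSet D Dn Dx Q (Γ₀ ∪ {t'}) := by
        have hsub : Γ₀ ∪ {t'} ⊆ Dn :=
          Finset.union_subset hΓ₀.1 (Finset.singleton_subset_iff.mpr hac'.1)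
        exact (hit_iff D Dn Dx Q hpart hdisj hmono hsub).mpr hΓ₀.2.2.2
      have h1 := hminhit _ hhit₀
      have h2 : (Γ₀ ∪ {t'}).card = Γ₀.card + 1 := by
        rw [Finset.union_comm, ← Finset.insert_eq, Finset.card_insert_of_notMem hΓ₀.2.1]
      have hmceq : minContingency D Dn Q t' = Γ₀.card := hΓ₀card.symm
      have : Γ.card ≤ minContingency D Dn Q t' := by omega
      exact one_div_le_one_div_nat this
    · rw [if_neg hac']
      positivity
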